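/- Let E and F be subspaces of R^N with ||P_F P_E||_op <= delta, where P_E, P_F are orthogonal projections. Let H = E + F and let E' = F^perp ∩ H. Then for any x in E, ||x - P_{E'} x||_2 <= ||P_F x||_2 <= delta * ||x||_2. -/

import Mathlib

open scoped BigOperators

noncomputable def l2 {d : ℕ} (v : Fin d → ℝ) : ℝ := Real.sqrt (∑ i, (v i)^2)

noncomputable def l1 {d : ℕ} (v : Fin d → ℝ) : ℝ := ∑ i, |v i|

noncomputable def linf {d : ℕ} (v : Fin d → ℝ) : ℝ := ⨆ i, |v i|

noncomputable def restrict {d : ℕ} (v : Fin d → ℝ) (T : Finset (Fin d)) : Fin d → ℝ :=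
  fun i => if i ∈ T then v i else 0

open Classical in
noncomputable def spt {d : ℕ} (v : Fin d → ℝ) : Finset (Fin d) :=
  Finset.univ.filter (fun i => v i ≠ 0)

def RIC {N d : ℕ} (Φ : Matrix (Fin N) (Fin d) ℝ) (m : ℕ) (ε : ℝ) : Prop :=
  ∀ z : Fin d → ℝ, (spt z).card ≤ m →
    (1 - ε) * l2 z ≤ l2 (Φ.mulVec z) ∧ l2 (Φ.mulVec z) ≤ (1 + ε) * l2 z

noncomputable def proj {N : ℕ} (L : Submodule ℝ (EuclideanSpace ℝ (Fin N))) :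
    EuclideanSpace ℝ (Fin N) →L[ℝ] EuclideanSpace ℝ (Fin N) :=
  L.subtypeL.comp L.orthogonalProjection

noncomputable def colSpan {N d : ℕ} (Φ : Matrix (Fin N) (Fin d) ℝ) (I : Finset (Fin d)) :
    Submodule ℝ (EuclideanSpace ℝ (Fin N)) :=
  Submodule.span ℝ ((fun j => (WithLp.toLp 2 (fun i => Φ i j) : EuclideanSpace ℝ (Fin N))) '' (I : Set (Fin d)))

/-- E is close to E' = F^⊥ ∩ (E + F) when ‖P_F P_E‖ ≤ δ. -/
theorem stmt10 {N : ℕ} (E F : Submodule ℝ (EuclideanSpace ℝ (Fin N))) (δ : ℝ)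
    (h : ‖(proj F).comp (proj E)‖ ≤ δ)
    (x : EuclideanSpace ℝ (Fin N)) (hx : x ∈ E) :
    ‖x - proj (Fᗮ ⊓ (E ⊔ F)) x‖ ≤ ‖proj F x‖ ∧ ‖proj F x‖ ≤ δ * ‖x‖ := by
  have hEx : proj E x = x := by
    exact Submodule.starProjection_eq_self_iff.2 hx
  constructor
  · have hy : x - proj F x ∈ Fᗮ ⊓ (E ⊔ F) := by
      constructor
      · exact Submodule.sub_starProjection_mem_orthogonal x
      · have : proj F x ∈ E ⊔ F := Submodule.mem_sup_right (Submodule.starProjection_apply_mem F x)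
        exact Submodule.sub_mem _ (Submodule.mem_sup_left hx) this
    have := Submodule.starProjection_minimal (U := Fᗮ ⊓ (E ⊔ F)) x
    have hle : ‖x - proj (Fᗮ ⊓ (E ⊔ F)) x‖ ≤ ‖x - (x - proj F x)‖ := by
      rw [show ((proj (Fᗮ ⊓ (E ⊔ F))) x : EuclideanSpace ℝ (Fin N)) =
        ((Fᗮ ⊓ (E ⊔ F)).starProjection x : EuclideanSpace ℝ (Fin N)) from rfl, this]
      exact ciInf_le ⟨0, fun r ⟨v, hv⟩ => hv ▸ norm_nonneg _⟩ (⟨_, hy⟩ : (Fᗮ ⊓ (E ⊔ F) : Submodule ℝ _))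
    simpa using hle
  · calc ‖proj F x‖ = ‖((proj F).comp (proj E)) x‖ := by simp [hEx]
      _ ≤ ‖(proj F).comp (proj E)‖ * ‖x‖ := ContinuousLinearMap.le_opNorm _ _
      _ ≤ δ * ‖x‖ := mul_le_mul_of_nonneg_right h (norm_nonneg _)
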